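/- arXiv:2604.09460 — 2 statements merged into one kernel-verified Lean document; each statement's English description precedes it below -/
import Mathlib

section
/- A path x[0] ∈ X belongs to PCEP if and only if there exists a family of paths {x[i]}_{i∈N} ⊆ X such that for all k ∈ {0}∪N, all τ ≥ 1, all nonempty coalitions C ⊆ N, and all ζ^C_τ ∈ Z^C, there exists j ∈ C with U_j(x[k]) ≥ U_j(x[k]; ζ^C_τ; x[j]). -/
open Set

section Setup

variable {N : Type*} [Fintype N] [DecidableEq N] {Z : N → Type*}

/-- A stage-game action profile. -/
abbrev Profile (Z : N → Type*) := ∀ i, Z i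

/-- An infinite path of action profiles. -/
abbrev RPath (Z : N → Type*) := ℕ → Profile Z

/-- The profile played in period `τ` when coalition `C` deviates to `ζ` (off `C`, players follow `x τ`). -/
def devProfile (x : RPath Z) (C : Finset N) (τ : ℕ) (ζ : Profile Z) : Profile Z :=
  fun i => if i ∈ C then ζ i else x τ i

/-- The spliced path `(x; ζ^C_τ; y)`: follow `x` before period `τ`, play the deviation profile at `τ`,
and follow `y` afterwards.  Periods are indexed from `0`. -/
def splice (x : RPath Z) (C : Finset N) (τ : ℕ) (ζ : Profile Z) (y : RPath Z) : RPath Z :=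
  fun t => if t < τ then x t else if t = τ then devProfile x C τ ζ else y (t - τ - 1)

/-- Discounted payoff `U_i(x) = (1-δ) ∑ δ^t u_i(x_t)`. -/
noncomputable def disc (u : N → Profile Z → ℝ) (δ : ℝ) (i : N) (x : RPath Z) : ℝ :=
  (1 - δ) * ∑' t : ℕ, δ ^ t * u i (x t)

/-- The coalitional enforceability operator `Ψ`. -/
def Psi (u : N → Profile Z → ℝ) (δ : ℝ) (Y : Set (RPath Z)) : Set (RPath Z) :=
  {x | ∀ C : Finset N, C.Nonempty → ∀ τ : ℕ, ∀ ζ : Profile Z,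
    ∃ p : N → RPath Z, (∀ i, p i ∈ Y) ∧
      ∃ i ∈ C, disc u δ i x ≥ disc u δ i (splice x C τ ζ (p i))}

/-- A history (position) is a finite list of past action profiles. -/
abbrev Hist (Z : N → Type*) := List (Profile Z)

/-- The history reached after `n` periods of following plan `f` from history `h`. -/
def planHist (f : Hist Z → Profile Z) (h : Hist Z) : ℕ → Hist Z
  | 0 => h
  | n + 1 => planHist f h n ++ [f (planHist f h n)]

/-- The continuation path prescribed by plan `f` after history `h`. -/
def planPath (f : Hist Z → Profile Z) (h : Hist Z) : RPath Z :=
  fun n => f (planHist f h n)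

/-- The position induced from `G` when coalition `C` deviates from path `x` in period `τ` via `ζ`. -/
def devHistory (G : Hist Z) (x : RPath Z) (C : Finset N) (τ : ℕ) (ζ : Profile Z) : Hist Z :=
  G ++ (List.ofFn fun t : Fin τ => x t) ++ [devProfile x C τ ζ]

/-- A Perfect Coalitional Equilibrium: after every history, every one-shot coalitional deviation
leaves some member of the deviating coalition no better off, given the plan's continuation. -/
def IsPCE (u : N → Profile Z → ℝ) (δ : ℝ) (f : Hist Z → Profile Z) : Prop :=
  ∀ h : Hist Z, ∀ C : Finset N, C.Nonempty → ∀ τ : ℕ, ∀ ζ : Profile Z,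
    ∃ i ∈ C, disc u δ i (planPath f h) ≥
      disc u δ i (splice (planPath f h) C τ ζ (planPath f (devHistory h (planPath f h) C τ ζ)))

/-- The set of Perfect Coalitional Equilibrium paths. -/
def PCEP (u : N → Profile Z → ℝ) (δ : ℝ) : Set (RPath Z) :=
  {x | ∃ f : Hist Z → Profile Z, IsPCE u δ f ∧ planPath f [] = x}

/-- Payoff at position `G`: `u_i(G)(x) = a_i(G) + δ^{|G|} U_i(x)`. -/
noncomputable def posPayoff (u : N → Profile Z → ℝ) (δ : ℝ) (i : N) (G : Hist Z)
    (x : RPath Z) : ℝ :=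
  (1 - δ) * (∑ t : Fin G.length, δ ^ (t : ℕ) * u i (G.get t)) + δ ^ G.length * disc u δ i x

/-- The conservative dominion of position `G` relative to the standard of behavior `σ`. -/
def CDOM (u : N → Profile Z → ℝ) (δ : ℝ) (σ : Hist Z → Set (RPath Z)) (G : Hist Z) :
    Set (RPath Z) :=
  {x | ∃ C : Finset N, C.Nonempty ∧ ∃ τ : ℕ, ∃ ζ : Profile Z,
    (σ (devHistory G x C τ ζ)).Nonempty ∧
    ∀ y ∈ σ (devHistory G x C τ ζ), ∀ i ∈ C,
      posPayoff u δ i (devHistory G x C τ ζ) y > posPayoff u δ i G x}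

/-- A standard of behavior is nondiscriminating if it assigns the same set to every position. -/
def Nondiscriminating (σ : Hist Z → Set (RPath Z)) : Prop := ∀ G H, σ G = σ H

/-- Conservative internal stability. -/
def ConsInternallyStable (u : N → Profile Z → ℝ) (δ : ℝ) (σ : Hist Z → Set (RPath Z)) : Prop :=
  ∀ G, σ G ∩ CDOM u δ σ G = ∅

/-- Conservative external stability. -/
def ConsExternallyStable (u : N → Profile Z → ℝ) (δ : ℝ) (σ : Hist Z → Set (RPath Z)) : Prop :=
  ∀ G, (σ G)ᶜ ⊆ CDOM u δ σ G

end Setup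

section Aux
set_option linter.unusedSectionVars false

open Filter Topology

variable {N : Type*} [Fintype N] [DecidableEq N] {Z : N → Type*}
  [∀ i, MetricSpace (Z i)] [∀ i, CompactSpace (Z i)] [∀ i, Nonempty (Z i)]
  {u : N → Profile Z → ℝ} {δ : ℝ}

lemma exists_u_bound (hu : ∀ i, Continuous (u i)) (i : N) :
    ∃ M : ℝ, 0 ≤ M ∧ ∀ z, |u i z| ≤ M := by
  obtain ⟨z₀, -, hz₀⟩ := isCompact_univ.exists_isMaxOn (Set.univ_nonempty)
    ((hu i).abs.continuousOn)
  exact ⟨|u i z₀|, abs_nonneg _, fun z => hz₀ (Set.mem_univ z)⟩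

lemma summable_aux (hu : ∀ i, Continuous (u i)) (hδ0 : 0 < δ) (hδ1 : δ < 1) (i : N)
    (x : RPath Z) : Summable fun t : ℕ => δ ^ t * u i (x t) := by
  obtain ⟨M, hM0, hM⟩ := exists_u_bound hu i
  apply Summable.of_norm_bounded
    ((summable_geometric_of_lt_one hδ0.le hδ1).mul_right M)
  intro t
  rw [Real.norm_eq_abs, abs_mul, abs_pow, abs_of_pos hδ0]
  exact mul_le_mul_of_nonneg_left (hM _) (pow_nonneg hδ0.le t)

lemma disc_decomp (hu : ∀ i, Continuous (u i)) (hδ0 : 0 < δ) (hδ1 : δ < 1) (i : N)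
    (x : RPath Z) (t : ℕ) :
    disc u δ i x = (1 - δ) * ∑ s ∈ Finset.range t, δ ^ s * u i (x s)
      + δ ^ t * disc u δ i (fun n => x (t + n)) := by
  have hs := summable_aux hu hδ0 hδ1 i x
  have h2 : ∑' s : ℕ, δ ^ (s + t) * u i (x (s + t))
      = δ ^ t * ∑' s : ℕ, δ ^ s * u i (x (t + s)) := by
    rw [← tsum_mul_left]
    exact tsum_congr fun s => by rw [add_comm s t, pow_add]; ring
  unfold disc
  rw [← Summable.sum_add_tsum_nat_add t hs, h2]
  ring

lemma disc_sub_prefix (hu : ∀ i, Continuous (u i)) (hδ0 : 0 < δ) (hδ1 : δ < 1) (i : N)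
    {w w' : RPath Z} (t : ℕ) (h : ∀ s < t, w s = w' s) :
    disc u δ i w' - disc u δ i w =
      δ ^ t * (disc u δ i (fun n => w' (t + n)) - disc u δ i (fun n => w (t + n))) := by
  rw [disc_decomp hu hδ0 hδ1 i w t, disc_decomp hu hδ0 hδ1 i w' t]
  have he : ∑ s ∈ Finset.range t, δ ^ s * u i (w s)
      = ∑ s ∈ Finset.range t, δ ^ s * u i (w' s) :=
    Finset.sum_congr rfl fun s hs => by rw [h s (Finset.mem_range.1 hs)]
  rw [he]; ring

lemma continuous_disc (hu : ∀ i, Continuous (u i)) (hδ0 : 0 < δ) (hδ1 : δ < 1) (i : N) :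
    Continuous (disc u δ i) := by
  obtain ⟨M, hM0, hM⟩ := exists_u_bound hu i
  apply Continuous.mul continuous_const
  apply continuous_tsum (u := fun t : ℕ => δ ^ t * M)
    (fun t => Continuous.mul continuous_const ((hu i).comp (continuous_apply t)))
    ((summable_geometric_of_lt_one hδ0.le hδ1).mul_right M)
  intro t x
  show ‖δ ^ t * u i (x t)‖ ≤ δ ^ t * M
  rw [Real.norm_eq_abs, abs_mul, abs_pow, abs_of_pos hδ0]
  exact mul_le_mul_of_nonneg_left (hM _) (pow_nonneg hδ0.le t)

lemma splice_shift (x : RPath Z) (C : Finset N) (τ : ℕ) (ζ : Profile Z) (p : RPath Z) :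
    (fun n => splice x C τ ζ p (τ + 1 + n)) = p := by
  funext n
  simp only [splice]
  rw [if_neg (by omega), if_neg (by omega)]
  have : τ + 1 + n - τ - 1 = n := by omega
  rw [this]

lemma continuous_splice (C : Finset N) (τ : ℕ) (ζ : Profile Z) (p : RPath Z) :
    Continuous fun x : RPath Z => splice x C τ ζ p := by
  apply continuous_pi; intro t
  unfold splice
  by_cases h1 : t < τ
  · simp only [if_pos h1]; exact continuous_apply t
  · simp only [if_neg h1]
    by_cases h2 : t = τ
    · simp only [if_pos h2]
      unfold devProfile
      apply continuous_pi; intro i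
      by_cases h3 : i ∈ C
      · simp only [if_pos h3]; exact continuous_const
      · simp only [if_neg h3]
        exact (continuous_apply i).comp (continuous_apply τ)
    · simp only [if_neg h2]; exact continuous_const

lemma planHist_append (f : Hist Z → Profile Z) (D h : Hist Z) (n : ℕ) :
    planHist f (D ++ h) n = D ++ planHist (fun h' => f (D ++ h')) h n := by
  induction n with
  | zero => rfl
  | succ n ih => simp [planHist, ih, List.append_assoc]

lemma planPath_append (f : Hist Z → Profile Z) (D h : Hist Z) :
    planPath f (D ++ h) = planPath (fun h' => f (D ++ h')) h := by
  funext n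
  unfold planPath
  rw [planHist_append]

lemma devHistory_append (D h : Hist Z) (x : RPath Z) (C : Finset N) (τ : ℕ) (ζ : Profile Z) :
    devHistory (D ++ h) x C τ ζ = D ++ devHistory h x C τ ζ := by
  simp [devHistory, List.append_assoc]

lemma isPCE_shift {f : Hist Z → Profile Z} (hf : IsPCE u δ f) (D : Hist Z) :
    IsPCE u δ (fun h' => f (D ++ h')) := by
  intro h C hC τ ζ
  have key := hf (D ++ h) C hC τ ζ
  rw [planPath_append f D h] at key
  rw [devHistory_append] at key
  rw [planPath_append f D (devHistory h (planPath (fun h' => f (D ++ h')) h) C τ ζ)] at key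
  exact key

lemma pcep_shift {f : Hist Z → Profile Z} (hf : IsPCE u δ f) (D : Hist Z) :
    planPath f D ∈ PCEP u δ := by
  refine ⟨fun h' => f (D ++ h'), isPCE_shift hf D, ?_⟩
  rw [← planPath_append, List.append_nil]

lemma claimA (hu : ∀ i, Continuous (u i)) (hδ0 : 0 < δ) (hδ1 : δ < 1) (xp : N → RPath Z)
    (hxp : ∀ j, ∀ y ∈ PCEP u δ, disc u δ j (xp j) ≤ disc u δ j y) :
    ∀ y ∈ PCEP u δ, ∀ C : Finset N, C.Nonempty → ∀ τ : ℕ, ∀ ζ : Profile Z,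
      ∃ j ∈ C, disc u δ j y ≥ disc u δ j (splice y C τ ζ (xp j)) := by
  rintro y ⟨f, hf, rfl⟩ C hC τ ζ
  obtain ⟨j, hjC, hineq⟩ := hf [] C hC τ ζ
  refine ⟨j, hjC, ?_⟩
  set w := planPath f (devHistory [] (planPath f []) C τ ζ) with hw
  have hwP : w ∈ PCEP u δ := pcep_shift hf _
  have h1 := hxp j w hwP
  have h2 := disc_sub_prefix hu hδ0 hδ1 j
    (w := splice (planPath f []) C τ ζ (xp j))
    (w' := splice (planPath f []) C τ ζ w) (τ + 1) ?_
  · rw [splice_shift, splice_shift] at h2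
    have hp : (0:ℝ) ≤ δ ^ (τ + 1) := pow_nonneg hδ0.le _
    nlinarith [hineq, h2, h1]
  · intro s hs
    unfold splice
    by_cases h : s < τ
    · rw [if_pos h, if_pos h]
    · have : s = τ := by omega
      rw [if_neg h, if_neg h, if_pos this, if_pos this]

/-- The set of players whose action in `a` differs from `b`. -/
noncomputable def devCoal (a b : Profile Z) : Finset N :=
  @Finset.filter _ (fun i => a i ≠ b i) (Classical.decPred _) Finset.univ

lemma mem_devCoal {a b : Profile Z} {i : N} : i ∈ devCoal a b ↔ a i ≠ b i := by
  simp [devCoal]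

lemma devCoal_nonempty {a b : Profile Z} (h : a ≠ b) : (devCoal a b).Nonempty := by
  by_contra hne
  rw [Finset.not_nonempty_iff_eq_empty] at hne
  apply h
  funext i
  by_contra hi
  have : i ∈ devCoal a b := mem_devCoal.2 hi
  simp [hne] at this

open Classical in
/-- Transition of the simple-strategy automaton. -/
noncomputable def simpleStep (P : Option N → RPath Z) (J : Option N → ℕ → Profile Z → Option N) :
    Option N × ℕ → Profile Z → Option N × ℕ :=
  fun s a => if a = P s.1 s.2 then (s.1, s.2 + 1) else (J s.1 s.2 a, 0)

noncomputable def simpleState (P : Option N → RPath Z)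
    (J : Option N → ℕ → Profile Z → Option N) (h : Hist Z) : Option N × ℕ :=
  h.foldl (simpleStep P J) (none, 0)

noncomputable def simplePlan (P : Option N → RPath Z)
    (J : Option N → ℕ → Profile Z → Option N) : Hist Z → Profile Z :=
  fun h => P (simpleState P J h).1 (simpleState P J h).2

lemma simplePlan_apply (P : Option N → RPath Z) (J : Option N → ℕ → Profile Z → Option N)
    (h : Hist Z) : simplePlan P J h = P (simpleState P J h).1 (simpleState P J h).2 := rfl

lemma simpleState_append (P : Option N → RPath Z) (J : Option N → ℕ → Profile Z → Option N)
    (h : Hist Z) (a : Profile Z) :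
    simpleState P J (h ++ [a]) = simpleStep P J (simpleState P J h) a := by
  simp [simpleState]

lemma simpleStep_eq (P : Option N → RPath Z) (J : Option N → ℕ → Profile Z → Option N)
    (k : Option N) (t : ℕ) {a : Profile Z} (h : a = P k t) :
    simpleStep P J (k, t) a = (k, t + 1) := by
  simp [simpleStep, h]

lemma simpleStep_ne (P : Option N → RPath Z) (J : Option N → ℕ → Profile Z → Option N)
    (k : Option N) (t : ℕ) {a : Profile Z} (h : a ≠ P k t) :
    simpleStep P J (k, t) a = (J k t a, 0) := by
  simp [simpleStep, h]

lemma simpleState_planHist (P : Option N → RPath Z) (J : Option N → ℕ → Profile Z → Option N)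
    (h : Hist Z) (n : ℕ) :
    simpleState P J (planHist (simplePlan P J) h n)
      = ((simpleState P J h).1, (simpleState P J h).2 + n) := by
  induction n with
  | zero => rfl
  | succ n ih =>
    show simpleState P J (planHist (simplePlan P J) h n
        ++ [simplePlan P J (planHist (simplePlan P J) h n)]) = _
    rw [simpleState_append]
    have ha : simplePlan P J (planHist (simplePlan P J) h n)
        = P (simpleState P J h).1 ((simpleState P J h).2 + n) := by
      rw [simplePlan_apply, ih]
    rw [ih, ha, simpleStep_eq]
    · rfl
    · rfl

lemma planPath_simple (P : Option N → RPath Z) (J : Option N → ℕ → Profile Z → Option N)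
    (h : Hist Z) (n : ℕ) :
    planPath (simplePlan P J) h n
      = P (simpleState P J h).1 ((simpleState P J h).2 + n) := by
  show simplePlan P J (planHist (simplePlan P J) h n) = _
  rw [simplePlan_apply, simpleState_planHist]

lemma planHist_eq_append_ofFn (f : Hist Z → Profile Z) (h : Hist Z) (n : ℕ) :
    planHist f h n = h ++ List.ofFn (fun s : Fin n => planPath f h s) := by
  induction n with
  | zero => simp [planHist]
  | succ n ih =>
    show planHist f h n ++ [planPath f h n] = h ++ List.ofFn (fun s : Fin (n + 1) => planPath f h s)
    rw [List.ofFn_succ', ih]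
    simp [List.concat_eq_append, List.append_assoc]

lemma simple_isPCE (hu : ∀ i, Continuous (u i)) (hδ0 : 0 < δ) (hδ1 : δ < 1)
    (P : Option N → RPath Z) (J : Option N → ℕ → Profile Z → Option N)
    (hJ : ∀ k t a, a ≠ P k t → ∃ j ∈ devCoal a (P k t), J k t a = some j ∧
      disc u δ j (P k) ≥ disc u δ j (splice (P k) (devCoal a (P k t)) t a (P (some j)))) :
    IsPCE u δ (simplePlan P J) := by
  intro h C hC τ ζ
  set k : Option N := (simpleState P J h).1 with hk
  set t : ℕ := (simpleState P J h).2 with ht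
  have hx : ∀ n, planPath (simplePlan P J) h n = P k (t + n) := planPath_simple P J h
  set x : RPath Z := planPath (simplePlan P J) h with hxdef
  set a : Profile Z := devProfile x C τ ζ with ha
  have hdevh : devHistory h x C τ ζ = planHist (simplePlan P J) h τ ++ [a] := by
    unfold devHistory
    rw [planHist_eq_append_ofFn (simplePlan P J) h τ]
  have hstate : simpleState P J (devHistory h x C τ ζ) = simpleStep P J (k, t + τ) a := by
    rw [hdevh, simpleState_append, simpleState_planHist]
  by_cases heq : a = P k (t + τ)
  · refine ⟨hC.choose, hC.choose_spec, ?_⟩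
    have hst2 : simpleState P J (devHistory h x C τ ζ) = (k, t + τ + 1) := by
      rw [hstate, simpleStep_eq P J _ _ heq]
    have hcont : ∀ n, planPath (simplePlan P J) (devHistory h x C τ ζ) n = x (τ + 1 + n) := by
      intro n
      rw [planPath_simple, hst2]
      show P k (t + τ + 1 + n) = x (τ + 1 + n)
      rw [hx (τ + 1 + n)]
      have e : t + (τ + 1 + n) = t + τ + 1 + n := by omega
      rw [e]
    have hsplice : splice x C τ ζ (planPath (simplePlan P J) (devHistory h x C τ ζ)) = x := by
      funext n
      simp only [splice]
      by_cases h1 : n < τ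
      · rw [if_pos h1]
      · rw [if_neg h1]
        by_cases h2 : n = τ
        · rw [if_pos h2, ← ha, heq, h2, hx τ]
        · rw [if_neg h2, hcont (n - τ - 1)]
          have e : τ + 1 + (n - τ - 1) = n := by omega
          rw [e]
    rw [hsplice]
  · obtain ⟨j, hjdev, hJeq, hineq⟩ := hJ k (t + τ) a heq
    have hcont : planPath (simplePlan P J) (devHistory h x C τ ζ) = P (some j) := by
      funext n
      rw [planPath_simple, hstate, simpleStep_ne P J _ _ heq, hJeq]
      show P (some j) (0 + n) = P (some j) n
      rw [Nat.zero_add]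
    have hjC : j ∈ C := by
      have hne := mem_devCoal.1 hjdev
      by_contra hjc
      apply hne
      have hax : a j = x τ j := by rw [ha]; simp [devProfile, hjc]
      rw [hax, hx τ]
    refine ⟨j, hjC, ?_⟩
    have hdevP : devProfile (P k) (devCoal a (P k (t + τ))) (t + τ) a = a := by
      funext i
      unfold devProfile
      by_cases hi : i ∈ devCoal a (P k (t + τ))
      · rw [if_pos hi]
      · rw [if_neg hi]
        have hai : a i = P k (t + τ) i := by
          by_contra hcon
          exact hi (mem_devCoal.2 hcon)
        rw [hai]
    have hshift : (fun n => splice (P k) (devCoal a (P k (t + τ))) (t + τ) a (P (some j)) (t + n))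
        = splice x C τ ζ (P (some j)) := by
      funext n
      simp only [splice]
      by_cases h1 : n < τ
      · rw [if_pos (show t + n < t + τ by omega), if_pos h1, hx n]
      · rw [if_neg (show ¬ t + n < t + τ by omega), if_neg h1]
        by_cases h2 : n = τ
        · rw [if_pos (show t + n = t + τ by omega), if_pos h2, hdevP, ha]
        · rw [if_neg (show ¬ t + n = t + τ by omega), if_neg h2]
          have e : t + n - (t + τ) - 1 = n - τ - 1 := by omega
          rw [e]
    have hpre : ∀ s < t, splice (P k) (devCoal a (P k (t + τ))) (t + τ) a (P (some j)) s = P k s := by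
      intro s hs
      simp only [splice]
      rw [if_pos (show s < t + τ by omega)]
    have key := disc_sub_prefix hu hδ0 hδ1 j
      (w := splice (P k) (devCoal a (P k (t + τ))) (t + τ) a (P (some j)))
      (w' := P k) t hpre
    rw [hshift] at key
    have hxP : (fun n => P k (t + n)) = x := (funext hx).symm
    rw [hxP] at key
    rw [hcont]
    have hpt : (0:ℝ) < δ ^ t := pow_pos hδ0 t
    nlinarith [hineq, key]

end Aux

theorem optimal_penal_code_characterization {N : Type*} [Fintype N] [DecidableEq N] {Z : N → Type*}
    [∀ i, MetricSpace (Z i)] [∀ i, CompactSpace (Z i)] [∀ i, Nonempty (Z i)]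
    (u : N → Profile Z → ℝ) (δ : ℝ)
    (hu : ∀ i, Continuous (u i)) (hδ0 : 0 < δ) (hδ1 : δ < 1)
    (x0 : RPath Z) :
    x0 ∈ PCEP u δ ↔ ∃ xp : N → RPath Z,
      ∀ k : Option N, ∀ τ : ℕ, ∀ C : Finset N, C.Nonempty → ∀ ζ : Profile Z,
        ∃ j ∈ C, disc u δ j (k.elim x0 xp) ≥
          disc u δ j (splice (k.elim x0 xp) C τ ζ (xp j)) := by
  constructor
  · intro hx0
    have hKc : IsCompact (closure (PCEP u δ)) := isClosed_closure.isCompact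
    have hKne : (closure (PCEP u δ)).Nonempty := ⟨x0, subset_closure hx0⟩
    have hmin : ∀ j : N, ∃ m ∈ closure (PCEP u δ), ∀ y ∈ closure (PCEP u δ),
        disc u δ j m ≤ disc u δ j y := by
      intro j
      obtain ⟨m, hm, hmm⟩ := hKc.exists_isMinOn hKne
        (continuous_disc hu hδ0 hδ1 j).continuousOn
      exact ⟨m, hm, fun y hy => hmm hy⟩
    choose xp hxpK hxpmin using hmin
    have hA := claimA hu hδ0 hδ1 xp (fun j y hy => hxpmin j y (subset_closure hy))
    have hB : ∀ y ∈ closure (PCEP u δ), ∀ C : Finset N, C.Nonempty → ∀ τ : ℕ, ∀ ζ : Profile Z,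
        ∃ j ∈ C, disc u δ j y ≥ disc u δ j (splice y C τ ζ (xp j)) := by
      intro y hy C hC τ ζ
      obtain ⟨ys, hys, hlim⟩ := mem_closure_iff_seq_limit.1 hy
      choose js hjsC hjs using fun m => hA (ys m) (hys m) C hC τ ζ
      have hfreq : ∃ j ∈ C, ∃ᶠ m in Filter.atTop, js m = j := by
        by_contra hcon
        push_neg at hcon
        have hev : ∀ᶠ m in Filter.atTop, ∀ j ∈ C, js m ≠ j := by
          rw [Filter.eventually_all_finset]
          intro j hj
          exact hcon j hj
        obtain ⟨m, hm⟩ := hev.exists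
        exact hm (js m) (hjsC m) rfl
      obtain ⟨j, hjC, hfr⟩ := hfreq
      refine ⟨j, hjC, ?_⟩
      haveI hne : (Filter.atTop ⊓ Filter.principal {m | js m = j}).NeBot :=
        Filter.frequently_iff_neBot.1 hfr
      have hcont1 : Continuous fun z : RPath Z =>
          disc u δ j z - disc u δ j (splice z C τ ζ (xp j)) :=
        (continuous_disc hu hδ0 hδ1 j).sub
          ((continuous_disc hu hδ0 hδ1 j).comp (continuous_splice C τ ζ (xp j)))
      have htend := (hcont1.tendsto y).comp (hlim.mono_left
        (inf_le_left : Filter.atTop ⊓ Filter.principal {m | js m = j} ≤ Filter.atTop))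
      have hev2 : ∀ᶠ m in Filter.atTop ⊓ Filter.principal {m | js m = j},
          (0:ℝ) ≤ ((fun z : RPath Z =>
            disc u δ j z - disc u δ j (splice z C τ ζ (xp j))) ∘ ys) m := by
        rw [Filter.eventually_inf_principal]
        refine Filter.Eventually.of_forall (fun m hm => ?_)
        have hmj : js m = j := hm
        have hineq := hjs m
        rw [hmj] at hineq
        simp only [Function.comp_apply]
        linarith
      have hres := ge_of_tendsto htend hev2
      linarith
    refine ⟨xp, fun k τ C hC ζ => ?_⟩
    have hyK : (k.elim x0 xp) ∈ closure (PCEP u δ) := by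
      cases k with
      | none => exact subset_closure hx0
      | some j => exact hxpK j
    exact hB _ hyK C hC τ ζ
  · rintro ⟨xp, hH⟩
    classical
    set P : Option N → RPath Z := fun k => Option.elim k x0 xp with hP
    have hch : ∀ (k : Option N) (t : ℕ) (a : Profile Z), a ≠ P k t →
        ∃ j ∈ devCoal a (P k t), disc u δ j (P k) ≥
          disc u δ j (splice (P k) (devCoal a (P k t)) t a (P (some j))) := by
      intro k t a hne
      exact hH k t (devCoal a (P k t)) (devCoal_nonempty hne) a
    choose j' hj'mem hj'ineq using hch
    set J : Option N → ℕ → Profile Z → Option N :=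
      fun k t a => if hne : a = P k t then none else some (j' k t a hne) with hJdef
    have hJ : ∀ k t a, a ≠ P k t → ∃ jj ∈ devCoal a (P k t), J k t a = some jj ∧
        disc u δ jj (P k) ≥
          disc u δ jj (splice (P k) (devCoal a (P k t)) t a (P (some jj))) := by
      intro k t a hne
      refine ⟨j' k t a hne, hj'mem k t a hne, ?_, hj'ineq k t a hne⟩
      simp [hJdef, hne]
    refine ⟨simplePlan P J, simple_isPCE hu hδ0 hδ1 P J hJ, ?_⟩
    funext n
    rw [planPath_simple]
    have hstate0 : simpleState P J ([] : Hist Z) = (none, 0) := rfl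
    rw [hstate0]
    show P none (0 + n) = x0 n
    rw [Nat.zero_add]
    simp [hP]
end

section
/- Characterization of undominated paths (Proposition 5.4): let σ be a nondiscriminating SB for (γ^C, Γ) such that for each i ∈ N the set argmin{U_i(x) : x ∈ σ(G⁰)} is nonempty, and pick z(i|σ) in this argmin. Then a path y ∉ CDOM(σ, G⁰) if and only if for every nonempty coalition C ⊆ N, every period τ ≥ 1, and every ζ^C_τ ∈ Z^C, there exists i ∈ C with U_i(y) ≥ U_i(y; ζ^C_τ; z(i|σ)). -/
open Set

section Aux

variable {N : Type*} [Fintype N] [DecidableEq N] {Z : N → Type*}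
  [∀ i, MetricSpace (Z i)] [∀ i, CompactSpace (Z i)] [∀ i, Nonempty (Z i)]

set_option maxHeartbeats 1000000 in
lemma usummable (u : N → Profile Z → ℝ) (δ : ℝ) (hu : ∀ i, Continuous (u i))
    (hδ0 : 0 < δ) (hδ1 : δ < 1) (i : N) (x : RPath Z) :
    Summable (fun t : ℕ => δ ^ t * u i (x t)) := by
  obtain ⟨p₀, -, hp₀⟩ := isCompact_univ.exists_isMaxOn Set.univ_nonempty
    ((hu i).abs.continuousOn)
  replace hp₀ : ∀ p, |u i p| ≤ |u i p₀| := fun p => hp₀ (Set.mem_univ p)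
  apply Summable.of_abs
  refine Summable.of_nonneg_of_le (fun t => abs_nonneg _) (fun t => ?_)
    ((summable_geometric_of_lt_one hδ0.le hδ1).mul_left |u i p₀|)
  rw [abs_mul, abs_of_nonneg (pow_nonneg hδ0.le t), mul_comm]
  exact mul_le_mul_of_nonneg_right (hp₀ (x t)) (pow_nonneg hδ0.le t)

lemma devHistory_length (y : RPath Z) (C : Finset N) (τ : ℕ) (ζ : Profile Z) :
    (devHistory ([] : Hist Z) y C τ ζ).length = τ + 1 := by
  simp [devHistory]

lemma devHistory_get (y w : RPath Z) (C : Finset N) (τ : ℕ) (ζ : Profile Z)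
    (t : Fin (devHistory ([] : Hist Z) y C τ ζ).length) :
    (devHistory ([] : Hist Z) y C τ ζ).get t = splice y C τ ζ w t := by
  have ht : (t : ℕ) < τ + 1 := by
    have h := t.isLt
    simp only [devHistory, List.nil_append, List.length_append, List.length_ofFn,
      List.length_cons, List.length_nil] at h
    omega
  rcases lt_or_eq_of_le (Nat.lt_succ_iff.mp ht) with h | h
  · rw [List.get_eq_getElem]
    simp only [devHistory, List.nil_append]
    rw [List.getElem_append_left (by simpa using h)]
    simp [splice, h]
  · rw [List.get_eq_getElem]
    simp only [devHistory, List.nil_append]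
    rw [List.getElem_append_right (by simpa using h.ge)]
    simp [splice, h]

lemma disc_splice (u : N → Profile Z → ℝ) (δ : ℝ) (hu : ∀ i, Continuous (u i))
    (hδ0 : 0 < δ) (hδ1 : δ < 1) (y w : RPath Z) (C : Finset N) (τ : ℕ) (ζ : Profile Z) (i : N) :
    disc u δ i (splice y C τ ζ w) = posPayoff u δ i (devHistory ([] : Hist Z) y C τ ζ) w := by
  have hsum := usummable u δ hu hδ0 hδ1 i (splice y C τ ζ w)
  have hsplit := Summable.sum_add_tsum_nat_add (τ + 1) hsum
  have htail : ∀ t : ℕ, splice y C τ ζ w (t + (τ + 1)) = w t := by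
    intro t
    simp only [splice]
    rw [if_neg (show ¬ t + (τ + 1) < τ by omega), if_neg (show ¬ t + (τ + 1) = τ by omega),
      show t + (τ + 1) - τ - 1 = t by omega]
  have htsum : (∑' t : ℕ, δ ^ (t + (τ + 1)) * u i (splice y C τ ζ w (t + (τ + 1))))
      = δ ^ (τ + 1) * ∑' t : ℕ, δ ^ t * u i (w t) := by
    rw [← tsum_mul_left]
    congr 1
    funext t
    rw [htail t, pow_add]
    ring
  rw [disc, ← hsplit, htsum, posPayoff, disc]
  have hfin : (∑ t : Fin (devHistory ([] : Hist Z) y C τ ζ).length,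
      δ ^ (t : ℕ) * u i ((devHistory ([] : Hist Z) y C τ ζ).get t))
      = ∑ t ∈ Finset.range (τ + 1), δ ^ t * u i (splice y C τ ζ w t) := by
    have h1 : (∑ t : Fin (devHistory ([] : Hist Z) y C τ ζ).length,
        δ ^ (t : ℕ) * u i ((devHistory ([] : Hist Z) y C τ ζ).get t))
        = ∑ t : Fin (devHistory ([] : Hist Z) y C τ ζ).length,
          (fun n : ℕ => δ ^ n * u i (splice y C τ ζ w n)) (t : ℕ) :=
      Finset.sum_congr rfl (fun t _ => by rw [devHistory_get y w C τ ζ t])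
    rw [h1, Fin.sum_univ_eq_sum_range (fun n : ℕ => δ ^ n * u i (splice y C τ ζ w n)),
      devHistory_length]
  rw [hfin, devHistory_length]
  ring

lemma posPayoff_nil (u : N → Profile Z → ℝ) (δ : ℝ) (i : N) (x : RPath Z) :
    posPayoff u δ i ([] : Hist Z) x = disc u δ i x := by
  simp [posPayoff]

end Aux


theorem cdom_characterization {N : Type*} [Fintype N] [DecidableEq N] {Z : N → Type*}
    [∀ i, MetricSpace (Z i)] [∀ i, CompactSpace (Z i)] [∀ i, Nonempty (Z i)]
    (u : N → Profile Z → ℝ) (δ : ℝ)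
    (hu : ∀ i, Continuous (u i)) (hδ0 : 0 < δ) (hδ1 : δ < 1)
    (σ : Hist Z → Set (RPath Z)) (hnd : Nondiscriminating σ)
    (z : N → RPath Z)
    (hz : ∀ i, z i ∈ σ ([] : Hist Z) ∧
      ∀ x ∈ σ ([] : Hist Z), disc u δ i (z i) ≤ disc u δ i x)
    (y : RPath Z) :
    y ∉ CDOM u δ σ ([] : Hist Z) ↔
      ∀ C : Finset N, C.Nonempty → ∀ τ : ℕ, ∀ ζ : Profile Z,
        ∃ i ∈ C, disc u δ i y ≥ disc u δ i (splice y C τ ζ (z i)) := by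
  constructor
  · intro hnot C hC τ ζ
    by_contra hcon
    push_neg at hcon
    apply hnot
    refine ⟨C, hC, τ, ζ, ?_, ?_⟩
    · rw [hnd _ ([] : Hist Z)]
      exact ⟨z hC.choose, (hz hC.choose).1⟩
    · intro w hw i hi
      rw [← disc_splice u δ hu hδ0 hδ1, posPayoff_nil]
      have hw' : w ∈ σ ([] : Hist Z) := by rwa [hnd _ ([] : Hist Z)] at hw
      have h1 : disc u δ i (splice y C τ ζ (z i)) ≤ disc u δ i (splice y C τ ζ w) := by
        rw [disc_splice u δ hu hδ0 hδ1, disc_splice u δ hu hδ0 hδ1]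
        simp only [posPayoff]
        have := (hz i).2 w hw'
        have hp : (0:ℝ) < δ ^ (devHistory ([] : Hist Z) y C τ ζ).length := by positivity
        nlinarith
      exact lt_of_lt_of_le (hcon i hi) h1
  · rintro h ⟨C, hC, τ, ζ, -, hdom⟩
    obtain ⟨i, hi, hge⟩ := h C hC τ ζ
    have hzi : z i ∈ σ (devHistory ([] : Hist Z) y C τ ζ) := by
      rw [hnd _ ([] : Hist Z)]; exact (hz i).1
    have := hdom (z i) hzi i hi
    rw [← disc_splice u δ hu hδ0 hδ1, posPayoff_nil] at this
    exact absurd hge (not_le.mpr this)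
end
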